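/- For all Ω, λ ∈ ℝ, ξ ∈ ℝ² and E ∈ ℂ, det(H₊(ξ) − E·I₄) = det(H₋(ξ) − E·I₄); that is, the AB-stacked and BA-stacked bulk Hamiltonians have the same characteristic polynomial, hence the same eigenvalues, at every momentum ξ. -/

import Mathlib

open Complex Matrix

/-- The Fourier-domain bulk Hamiltonian of gated twisted bilayer graphene with
AB stacking (valley `η = 1`). -/
noncomputable def Hplus (Ω lam : ℝ) (ξ : ℝ × ℝ) : Matrix (Fin 4) (Fin 4) ℂ :=
  !![(Ω : ℂ), (ξ.1 : ℂ) - (ξ.2 : ℂ) * I, 0, 0;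
     (ξ.1 : ℂ) + (ξ.2 : ℂ) * I, (Ω : ℂ), (lam : ℂ), 0;
     0, (lam : ℂ), -(Ω : ℂ), (ξ.1 : ℂ) - (ξ.2 : ℂ) * I;
     0, 0, (ξ.1 : ℂ) + (ξ.2 : ℂ) * I, -(Ω : ℂ)]

/-- The Fourier-domain bulk Hamiltonian of gated twisted bilayer graphene with
BA stacking (valley `η = 1`). -/
noncomputable def Hminus (Ω lam : ℝ) (ξ : ℝ × ℝ) : Matrix (Fin 4) (Fin 4) ℂ :=
  !![(Ω : ℂ), (ξ.1 : ℂ) - (ξ.2 : ℂ) * I, 0, (lam : ℂ);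
     (ξ.1 : ℂ) + (ξ.2 : ℂ) * I, (Ω : ℂ), 0, 0;
     0, 0, -(Ω : ℂ), (ξ.1 : ℂ) - (ξ.2 : ℂ) * I;
     (lam : ℂ), 0, (ξ.1 : ℂ) + (ξ.2 : ℂ) * I, -(Ω : ℂ)]

lemma eval_charpoly_aux (M : Matrix (Fin 4) (Fin 4) ℂ) (E : ℂ) :
    M.charpoly.eval E = (E • (1 : Matrix (Fin 4) (Fin 4) ℂ) - M).det := by
  rw [Matrix.charpoly, ← Polynomial.coe_evalRingHom, RingHom.map_det]
  congr 1
  ext i j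
  simp only [RingHom.mapMatrix_apply, Matrix.map_apply]
  by_cases h : i = j <;>
    simp [h, Matrix.charmatrix_apply, Matrix.one_apply, Matrix.sub_apply, Matrix.smul_apply,
      Matrix.diagonal_apply]

set_option maxHeartbeats 1000000 in
/-- The AB- and BA-stacked bulk Hamiltonians have the same characteristic determinant at
every energy, hence the same characteristic polynomial and the same eigenvalues, at every
momentum `ξ`. -/
theorem charDet_Hplus_eq_charDet_Hminus (Ω lam : ℝ) (ξ : ℝ × ℝ) :
    (∀ E : ℂ, (Hplus Ω lam ξ - E • (1 : Matrix (Fin 4) (Fin 4) ℂ)).det =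
      (Hminus Ω lam ξ - E • (1 : Matrix (Fin 4) (Fin 4) ℂ)).det) ∧
    (Hplus Ω lam ξ).charpoly = (Hminus Ω lam ξ).charpoly ∧
    spectrum ℂ (Hplus Ω lam ξ) = spectrum ℂ (Hminus Ω lam ξ) := by
  have hdet : ∀ E : ℂ, (Hplus Ω lam ξ - E • (1 : Matrix (Fin 4) (Fin 4) ℂ)).det =
      (Hminus Ω lam ξ - E • (1 : Matrix (Fin 4) (Fin 4) ℂ)).det := by
    intro E
    have e1 : Hplus Ω lam ξ - E • (1 : Matrix (Fin 4) (Fin 4) ℂ) =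
        !![(Ω : ℂ) - E, (ξ.1 : ℂ) - (ξ.2 : ℂ) * I, 0, 0;
           (ξ.1 : ℂ) + (ξ.2 : ℂ) * I, (Ω : ℂ) - E, (lam : ℂ), 0;
           0, (lam : ℂ), -(Ω : ℂ) - E, (ξ.1 : ℂ) - (ξ.2 : ℂ) * I;
           0, 0, (ξ.1 : ℂ) + (ξ.2 : ℂ) * I, -(Ω : ℂ) - E] := by
      ext i j
      fin_cases i <;> fin_cases j <;> simp [Hplus, Matrix.one_apply]
    have e2 : Hminus Ω lam ξ - E • (1 : Matrix (Fin 4) (Fin 4) ℂ) =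
        !![(Ω : ℂ) - E, (ξ.1 : ℂ) - (ξ.2 : ℂ) * I, 0, (lam : ℂ);
           (ξ.1 : ℂ) + (ξ.2 : ℂ) * I, (Ω : ℂ) - E, 0, 0;
           0, 0, -(Ω : ℂ) - E, (ξ.1 : ℂ) - (ξ.2 : ℂ) * I;
           (lam : ℂ), 0, (ξ.1 : ℂ) + (ξ.2 : ℂ) * I, -(Ω : ℂ) - E] := by
      ext i j
      fin_cases i <;> fin_cases j <;> simp [Hminus, Matrix.one_apply]
    rw [e1, e2]
    have hsa : (1 : Fin 4).succAbove 2 = 3 := by decide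
    have hcs : Fin.castSucc (2 : Fin 3) = (2 : Fin 4) := by decide
    have hsa' : (3 : Fin 4).succAbove (2 : Fin 3) = 2 := by decide
    simp [Matrix.det_succ_row_zero, Fin.sum_univ_succ, hsa, hcs, hsa']
    ring
  have hdet' : ∀ E : ℂ, (E • (1 : Matrix (Fin 4) (Fin 4) ℂ) - Hplus Ω lam ξ).det =
      (E • (1 : Matrix (Fin 4) (Fin 4) ℂ) - Hminus Ω lam ξ).det := by
    intro E
    have h1 : E • (1 : Matrix (Fin 4) (Fin 4) ℂ) - Hplus Ω lam ξ
        = -(Hplus Ω lam ξ - E • (1 : Matrix (Fin 4) (Fin 4) ℂ)) := (neg_sub _ _).symm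
    have h2 : E • (1 : Matrix (Fin 4) (Fin 4) ℂ) - Hminus Ω lam ξ
        = -(Hminus Ω lam ξ - E • (1 : Matrix (Fin 4) (Fin 4) ℂ)) := (neg_sub _ _).symm
    rw [h1, h2, Matrix.det_neg, Matrix.det_neg, hdet E]
  have hcp : (Hplus Ω lam ξ).charpoly = (Hminus Ω lam ξ).charpoly := by
    apply Polynomial.funext
    intro E
    rw [eval_charpoly_aux, eval_charpoly_aux, hdet']
  refine ⟨hdet, hcp, ?_⟩
  ext E
  simp only [spectrum.mem_iff, Matrix.isUnit_iff_isUnit_det, not_iff_not]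
  have ha : (algebraMap ℂ (Matrix (Fin 4) (Fin 4) ℂ)) E = E • 1 := by
    rw [Algebra.algebraMap_eq_smul_one]
  rw [ha, hdet' E]
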